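/- arXiv:2109.05499 — 5 statements merged into one kernel-verified Lean document; each statement's English description precedes it below -/
import Mathlib

section
/- In any category base (X, C), if the intersection A ∩ B of two regions A and B does not contain a region, then A ∩ B is a singular set. -/
structure CatBase (X : Type*) where
  regions : Set (Set X)
  nonempty_X : Nonempty X
  cover : ∀ x : X, ∃ A ∈ regions, x ∈ A
  ax2 : ∀ A ∈ regions, ∀ D : Set (Set X), D ⊆ regions → D.Nonempty →
    D.Pairwise Disjoint → Cardinal.mk D < Cardinal.mk regions →
    ((∃ B ∈ regions, B ⊆ A ∩ ⋃₀ D) → ∃ C ∈ D, ∃ B ∈ regions, B ⊆ A ∩ C) ∧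
    (¬ (∃ B ∈ regions, B ⊆ A ∩ ⋃₀ D) →
      ∃ B ∈ regions, B ⊆ A ∧ ∀ C ∈ D, Disjoint B C)

namespace CatBase

variable {X : Type*}

/-- A set is singular if every region contains a subregion disjoint from it. -/
def Singular (cb : CatBase X) (S : Set X) : Prop :=
  ∀ A ∈ cb.regions, ∃ B ∈ cb.regions, B ⊆ A ∧ Disjoint B S

/-- A set is meager if it is a countable union of singular sets. -/
def Meager (cb : CatBase X) (S : Set X) : Prop :=
  ∃ f : ℕ → Set X, (∀ n, cb.Singular (f n)) ∧ S = ⋃ n, f n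

def Abundant (cb : CatBase X) (S : Set X) : Prop := ¬ cb.Meager S

/-- A set is Baire if every region has a subregion in which the set or its complement is meager. -/
def Baire (cb : CatBase X) (S : Set X) : Prop :=
  ∀ A ∈ cb.regions, ∃ B ∈ cb.regions, B ⊆ A ∧
    (cb.Meager (S ∩ B) ∨ cb.Meager (Sᶜ ∩ B))

end CatBase

theorem stmt0 {X : Type*} (cb : CatBase X) {A B : Set X}
    (hA : A ∈ cb.regions) (hB : B ∈ cb.regions)
    (h : ¬ ∃ C ∈ cb.regions, C ⊆ A ∩ B) :
    cb.Singular (A ∩ B) := by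
  -- First, A ≠ B, else A ⊆ A ∩ B contradicts h.
  have hne : A ≠ B := by
    rintro rfl
    exact h ⟨A, hA, by simp⟩
  have hcard : ∀ C : Set X, (1 : Cardinal) < Cardinal.mk cb.regions ∧
      Cardinal.mk ({C} : Set (Set X)) = 1 := by
    intro C
    constructor
    · rw [Cardinal.one_lt_iff_nontrivial]
      exact ⟨⟨A, hA⟩, ⟨B, hB⟩, by simpa using hne⟩
    · exact Cardinal.mk_singleton C
  intro E hE
  -- apply ax2 to E with D = {A}
  have h1 := cb.ax2 E hE {A} (by simpa using hA) ⟨A, rfl⟩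
    (Set.pairwise_singleton _ _) (by rw [(hcard A).2]; exact (hcard A).1)
  by_cases hEA : ∃ G ∈ cb.regions, G ⊆ E ∩ A
  · obtain ⟨G, hG, hGsub⟩ := hEA
    -- apply ax2 to G with D = {B}
    have h2 := cb.ax2 G hG {B} (by simpa using hB) ⟨B, rfl⟩
      (Set.pairwise_singleton _ _) (by rw [(hcard B).2]; exact (hcard B).1)
    have hGB : ¬ ∃ F ∈ cb.regions, F ⊆ G ∩ ⋃₀ {B} := by
      rintro ⟨F, hF, hFsub⟩
      refine h ⟨F, hF, ?_⟩
      rw [Set.sUnion_singleton] at hFsub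
      exact Set.subset_inter (hFsub.trans (Set.inter_subset_left.trans
        (hGsub.trans Set.inter_subset_right))) (hFsub.trans Set.inter_subset_right)
    obtain ⟨F, hF, hFG, hdisj⟩ := h2.2 hGB
    refine ⟨F, hF, hFG.trans (hGsub.trans Set.inter_subset_left), ?_⟩
    exact Disjoint.mono_right Set.inter_subset_right (hdisj B rfl)
  · have hEA' : ¬ ∃ G ∈ cb.regions, G ⊆ E ∩ ⋃₀ {A} := by
      simpa [Set.sUnion_singleton] using hEA
    obtain ⟨F, hF, hFE, hdisj⟩ := h1.2 hEA'
    exact ⟨F, hF, hFE, Disjoint.mono_right Set.inter_subset_left (hdisj A rfl)⟩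
end

section
/- (The Fundamental Theorem) In any category base, every abundant set is abundant everywhere in some region: if A is abundant, then there exists a region C such that A is abundant in every subregion of C (i.e., for every region D ⊆ C, A ∩ D is abundant). -/
open Classical in
/-- One step of the transfinite construction: given the current region `Ci` and the family
`Dfam` of previously chosen regions, choose (if possible, and if no subregion of `Ci`
lies in `⋃₀ Dfam`) a region `D ⊆ Ci` disjoint from all previously chosen regions with
`A ∩ D` meager. -/
noncomputable def cbStep {X : Type*} (cb : CatBase X) (A : Set X) (Ci : Set X)
    (Dfam : Set (Set X)) : Option (Set X) :=
  if h : (¬ (Dfam.Nonempty ∧ ∃ B ∈ cb.regions, B ⊆ Ci ∩ ⋃₀ Dfam)) ∧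
      ∃ D, D ∈ cb.regions ∧ D ⊆ Ci ∧ (∀ S ∈ Dfam, Disjoint D S) ∧ cb.Meager (A ∩ D)
  then some h.2.choose else none

lemma cbStep_some {X : Type*} {cb : CatBase X} {A Ci D : Set X} {Dfam : Set (Set X)}
    (h : cbStep cb A Ci Dfam = some D) :
    D ∈ cb.regions ∧ D ⊆ Ci ∧ (∀ S ∈ Dfam, Disjoint D S) ∧ cb.Meager (A ∩ D) := by
  unfold cbStep at h
  split at h
  · rename_i hc
    have hspec := hc.2.choose_spec
    injection h with h
    rwa [h] at hspec
  · exact absurd h (by simp)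

lemma cbStep_none {X : Type*} {cb : CatBase X} {A Ci : Set X} {Dfam : Set (Set X)}
    (h : cbStep cb A Ci Dfam = none) :
    (Dfam.Nonempty ∧ ∃ B ∈ cb.regions, B ⊆ Ci ∩ ⋃₀ Dfam) ∨
      ¬ ∃ D, D ∈ cb.regions ∧ D ⊆ Ci ∧ (∀ S ∈ Dfam, Disjoint D S) ∧ cb.Meager (A ∩ D) := by
  unfold cbStep at h
  split at h
  · exact absurd h (by simp)
  · rename_i hc
    by_cases h2 : ∃ D, D ∈ cb.regions ∧ D ⊆ Ci ∧ (∀ S ∈ Dfam, Disjoint D S) ∧ cb.Meager (A ∩ D)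
    · left
      by_contra h1
      exact hc ⟨h1, h2⟩
    · right
      exact h2

/-- The transfinite construction, indexed by a type of cardinality `#cb.regions`
(well-ordered with all initial segments of smaller cardinality). -/
noncomputable def cbChain {X : Type*} (cb : CatBase X) (A : Set X)
    (e : (Cardinal.mk cb.regions).ord.ToType → Set X) :
    (Cardinal.mk cb.regions).ord.ToType → Option (Set X) :=
  IsWellFounded.fix (α := (Cardinal.mk cb.regions).ord.ToType) (· < ·)
    (fun i prev => cbStep cb A (e i) {S | ∃ j, ∃ h : j < i, prev j h = some S})

lemma cbChain_eq {X : Type*} (cb : CatBase X) (A : Set X)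
    (e : (Cardinal.mk cb.regions).ord.ToType → Set X)
    (i : (Cardinal.mk cb.regions).ord.ToType) :
    cbChain cb A e i =
      cbStep cb A (e i) {S | ∃ j, ∃ _ : j < i, cbChain cb A e j = some S} :=
  IsWellFounded.fix_eq _ _ i

theorem stmt1 {X : Type*} (cb : CatBase X) {A : Set X}
    (hA : cb.Abundant A) :
    ∃ C ∈ cb.regions, ∀ D ∈ cb.regions, D ⊆ C → cb.Abundant (A ∩ D) := by
  classical
  by_contra hcon
  push_neg at hcon
  have H : ∀ C ∈ cb.regions, ∃ D ∈ cb.regions, D ⊆ C ∧ cb.Meager (A ∩ D) := by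
    intro C hC
    obtain ⟨D, hD, hDC, h⟩ := hcon C hC
    exact ⟨D, hD, hDC, not_not.mp h⟩
  -- set up the index type
  have hcardeq : Cardinal.mk ((Cardinal.mk cb.regions).ord.ToType) = Cardinal.mk cb.regions := by
    rw [Cardinal.mk_toType, Cardinal.card_ord]
  obtain ⟨eqv⟩ := Cardinal.eq.mp hcardeq
  set e : (Cardinal.mk cb.regions).ord.ToType → Set X := fun i => (eqv i : Set X) with he
  have heR : ∀ i, e i ∈ cb.regions := fun i => (eqv i).2
  have hesurj : ∀ C ∈ cb.regions, ∃ i, e i = C := by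
    intro C hC
    exact ⟨eqv.symm ⟨C, hC⟩, by simp [he]⟩
  set F := cbChain cb A e with hFdef
  have hF : ∀ i, F i = cbStep cb A (e i) {S | ∃ j, ∃ _ : j < i, F j = some S} :=
    fun i => cbChain_eq cb A e i
  set Dfam : (Cardinal.mk cb.regions).ord.ToType → Set (Set X) :=
    fun i => {S | ∃ j, ∃ _ : j < i, F j = some S} with hDfamdef
  set Dall : Set (Set X) := {S | ∃ i, F i = some S} with hDalldef
  have spec : ∀ i D, F i = some D →
      D ∈ cb.regions ∧ D ⊆ e i ∧ (∀ S ∈ Dfam i, Disjoint D S) ∧ cb.Meager (A ∩ D) := by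
    intro i D h
    rw [hF i] at h
    exact cbStep_some h
  have hDallsub : Dall ⊆ cb.regions := by
    rintro S ⟨i, hi⟩
    exact (spec i S hi).1
  have hDfamsub : ∀ i, Dfam i ⊆ Dall := by
    rintro i S ⟨j, _, hj⟩
    exact ⟨j, hj⟩
  have hpair : Dall.Pairwise Disjoint := by
    have key : ∀ i j, j < i → ∀ S T, F i = some S → F j = some T → Disjoint S T := by
      intro i j h S T hi hj
      exact (spec i S hi).2.2.1 T ⟨j, h, hj⟩
    rintro S ⟨i, hi⟩ T ⟨j, hj⟩ hST
    rcases lt_trichotomy j i with h | h | h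
    · exact key i j h S T hi hj
    · subst h
      rw [hi] at hj
      exact absurd (Option.some.inj hj) hST
    · exact (key j i h T S hj hi).symm
  have hcard : ∀ i, Cardinal.mk (Dfam i) < Cardinal.mk cb.regions := by
    intro i
    calc Cardinal.mk (Dfam i)
        ≤ Cardinal.mk ((fun j => (F j).getD ∅) '' Set.Iio i) := by
          apply Cardinal.mk_le_mk_of_subset
          rintro S ⟨j, hj, hFj⟩
          exact ⟨j, hj, by simp [hFj]⟩
      _ ≤ Cardinal.mk (Set.Iio i) := Cardinal.mk_image_le
      _ < Cardinal.mk cb.regions := Cardinal.mk_Iio_ord_toType i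
  -- key property: every region has a subregion contained in a member of Dall
  have P : ∀ C ∈ cb.regions, ∃ B ∈ cb.regions, B ⊆ C ∧ ∃ D ∈ Dall, B ⊆ D := by
    intro C hC
    obtain ⟨i, rfl⟩ := hesurj C hC
    cases hFi : F i with
    | some D =>
      obtain ⟨hD, hDe, _, _⟩ := spec i D hFi
      exact ⟨D, hD, hDe, D, ⟨i, hFi⟩, subset_rfl⟩
    | none =>
      have hnone := cbStep_none (hF i ▸ hFi)
      by_cases hex : (Dfam i).Nonempty ∧ ∃ B ∈ cb.regions, B ⊆ e i ∩ ⋃₀ Dfam i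
      · obtain ⟨hne', hB⟩ := hex
        obtain ⟨h1, _⟩ := cb.ax2 (e i) (heR i) (Dfam i) ((hDfamsub i).trans hDallsub)
          hne' (hpair.mono (hDfamsub i)) (hcard i)
        obtain ⟨D, hD, B', hB', hB'sub⟩ := h1 hB
        exact ⟨B', hB', (hB'sub.trans Set.inter_subset_left),
          D, hDfamsub i hD, hB'sub.trans Set.inter_subset_right⟩
      · exfalso
        have hno : ¬ ∃ D, D ∈ cb.regions ∧ D ⊆ e i ∧ (∀ S ∈ Dfam i, Disjoint D S) ∧
            cb.Meager (A ∩ D) := by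
          rcases hnone with h | h
          · exact absurd h hex
          · exact h
        apply hno
        by_cases hne' : (Dfam i).Nonempty
        · have hnosub : ¬ ∃ B ∈ cb.regions, B ⊆ e i ∩ ⋃₀ Dfam i := fun h => hex ⟨hne', h⟩
          obtain ⟨_, h2⟩ := cb.ax2 (e i) (heR i) (Dfam i) ((hDfamsub i).trans hDallsub)
            hne' (hpair.mono (hDfamsub i)) (hcard i)
          obtain ⟨B, hB, hBe, hBdisj⟩ := h2 hnosub
          obtain ⟨D, hD, hDB, hDmg⟩ := H B hB
          exact ⟨D, hD, hDB.trans hBe, fun S hS => (hBdisj S hS).mono_left hDB, hDmg⟩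
        · obtain ⟨D, hD, hDe, hDmg⟩ := H (e i) (heR i)
          exact ⟨D, hD, hDe, fun S hS => absurd ⟨S, hS⟩ hne', hDmg⟩
  -- choose singular decompositions of A ∩ D for D ∈ Dall
  have hmg : ∀ D, D ∈ Dall → ∃ g : ℕ → Set X, (∀ n, cb.Singular (g n)) ∧ A ∩ D = ⋃ n, g n := by
    rintro D ⟨i, hi⟩
    exact (spec i D hi).2.2.2
  choose! g hg1 hg2 using hmg
  set U : Set X := ⋃₀ Dall with hUdef
  set T : ℕ → Set X := fun n => ⋃ D ∈ Dall, g D n with hTdef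
  have hgsub : ∀ D ∈ Dall, ∀ n, g D n ⊆ A ∩ D := by
    intro D hD n
    rw [hg2 D hD]
    exact Set.subset_iUnion _ n
  have hTsing : ∀ n, cb.Singular (T n) := by
    intro n C hC
    obtain ⟨B, hB, hBC, D₀, hD₀, hBD₀⟩ := P C hC
    obtain ⟨B', hB', hB'B, hdisj'⟩ := hg1 D₀ hD₀ n B hB
    refine ⟨B', hB', hB'B.trans hBC, Set.disjoint_left.mpr ?_⟩
    intro x hx hxT
    simp only [hTdef, Set.mem_iUnion] at hxT
    obtain ⟨D, hD, hxg⟩ := hxT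
    by_cases hDD : D = D₀
    · subst hDD
      exact Set.disjoint_left.mp hdisj' hx hxg
    · have hxD : x ∈ D := (hgsub D hD n hxg).2
      have hxD₀ : x ∈ D₀ := hBD₀ (hB'B hx)
      exact Set.disjoint_left.mp (hpair hD hD₀ hDD) hxD hxD₀
  have hUsing : cb.Singular (A \ U) := by
    intro C hC
    obtain ⟨B, hB, hBC, D₀, hD₀, hBD₀⟩ := P C hC
    refine ⟨B, hB, hBC, Set.disjoint_left.mpr ?_⟩
    intro x hx hxAU
    exact hxAU.2 ⟨D₀, hD₀, hBD₀ hx⟩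
  apply hA
  refine ⟨fun n => Nat.casesOn n (A \ U) T, fun n => ?_, ?_⟩
  · cases n with
    | zero => exact hUsing
    | succ m => exact hTsing m
  · apply Set.Subset.antisymm
    · intro x hx
      by_cases hxU : x ∈ U
      · obtain ⟨D, hD, hxD⟩ := hxU
        have : x ∈ ⋃ n, g D n := by
          rw [← hg2 D hD]; exact ⟨hx, hxD⟩
        obtain ⟨n, hn⟩ := Set.mem_iUnion.mp this
        exact Set.mem_iUnion.mpr ⟨n + 1, Set.mem_iUnion₂.mpr ⟨D, hD, hn⟩⟩
      · exact Set.mem_iUnion.mpr ⟨0, hx, hxU⟩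
    · intro x hx
      obtain ⟨n, hn⟩ := Set.mem_iUnion.mp hx
      cases n with
      | zero => exact hn.1
      | succ m =>
        obtain ⟨D, hD, hxg⟩ := Set.mem_iUnion₂.mp hn
        exact (hgsub D hD m hxg).1
end

section
/- In any category base, a set A is non-Baire if and only if A has the (*)-property: there exists a region C such that for every subregion D of C and every set E essentially containing D (i.e., D − E is meager), the set A ∩ E is non-Baire. -/
namespace CatBase

variable {X : Type*}

lemma singular_mono (cb : CatBase X) {S T : Set X} (h : T ⊆ S) (hS : cb.Singular S) :
    cb.Singular T := by
  intro R hR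
  obtain ⟨B, hB, hBR, hd⟩ := hS R hR
  exact ⟨B, hB, hBR, hd.mono_right h⟩

lemma meager_mono (cb : CatBase X) {S T : Set X} (h : T ⊆ S) (hS : cb.Meager S) :
    cb.Meager T := by
  obtain ⟨f, hf, rfl⟩ := hS
  refine ⟨fun n => f n ∩ T, fun n => cb.singular_mono Set.inter_subset_left (hf n), ?_⟩
  rw [← Set.iUnion_inter]
  exact (Set.inter_eq_right.mpr h).symm

lemma meager_empty (cb : CatBase X) : cb.Meager (∅ : Set X) := by
  refine ⟨fun _ => ∅, fun n R hR => ⟨R, hR, subset_rfl, disjoint_bot_right⟩, by simp⟩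

lemma meager_union (cb : CatBase X) {S T : Set X} (hS : cb.Meager S) (hT : cb.Meager T) :
    cb.Meager (S ∪ T) := by
  obtain ⟨f, hf, rfl⟩ := hS
  obtain ⟨g, hg, rfl⟩ := hT
  refine ⟨fun n => if n % 2 = 0 then f (n / 2) else g (n / 2), fun n => ?_, ?_⟩
  · by_cases h : n % 2 = 0 <;> simp only [h, if_true, if_false, reduceIte] <;> [exact hf _; exact hg _]
  · ext x
    simp only [Set.mem_union, Set.mem_iUnion]
    constructor
    · rintro (⟨k, hk⟩ | ⟨k, hk⟩)
      · exact ⟨2 * k, by simpa using hk⟩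
      · refine ⟨2 * k + 1, ?_⟩
        have h1 : (2 * k + 1) % 2 = 1 := by omega
        have h2 : (2 * k + 1) / 2 = k := by omega
        simp [h1, h2, hk]
    · rintro ⟨n, hn⟩
      by_cases h : n % 2 = 0 <;> simp only [h, if_true, if_false, reduceIte] at hn
      · exact Or.inl ⟨n / 2, hn⟩
      · exact Or.inr ⟨n / 2, hn⟩

end CatBase

theorem stmt8 {X : Type*} (cb : CatBase X) (A : Set X) :
    ¬ cb.Baire A ↔
      ∃ C ∈ cb.regions, ∀ D ∈ cb.regions, D ⊆ C →
        ∀ E : Set X, cb.Meager (D \ E) → ¬ cb.Baire (A ∩ E) := by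
  constructor
  · intro hA
    by_contra hno
    push_neg at hno
    apply hA
    intro R hR
    obtain ⟨D, hD, hDR, E, hmeag, hBaire⟩ := hno R hR
    obtain ⟨B, hB, hBD, hcase⟩ := hBaire D hD
    refine ⟨B, hB, hBD.trans hDR, ?_⟩
    rcases hcase with h | h
    · left
      apply cb.meager_mono (T := A ∩ B) (S := (A ∩ E ∩ B) ∪ (D \ E))
        ?_ (cb.meager_union h hmeag)
      intro x ⟨hxA, hxB⟩
      by_cases hxE : x ∈ E
      · exact Or.inl ⟨⟨hxA, hxE⟩, hxB⟩
      · exact Or.inr ⟨hBD hxB, hxE⟩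
    · right
      apply cb.meager_mono ?_ h
      intro x ⟨hxA, hxB⟩
      exact ⟨fun ⟨h1, _⟩ => hxA h1, hxB⟩
  · rintro ⟨C, hC, hP⟩ hBaire
    have := hP C hC subset_rfl Set.univ (by simpa using cb.meager_empty)
    exact this (by simpa using hBaire)
end

section
/- In any M-family, every region is an abundant set; that is, every M-family is a Baire base. -/
structure MFamily (X : Type*) extends CatBase X where
  desc : ∀ f : ℕ → Set X, (∀ n, f n ∈ regions) → (∀ n, f (n+1) ⊆ f n) →
    (⋂ n, f n).Nonempty
  remove : ∀ A ∈ regions, ∀ x : X, ∃ B ∈ regions, B ⊆ A ∧ x ∉ B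

theorem stmt15 {X : Type*} (mf : MFamily X) :
    ∀ A ∈ mf.regions, mf.toCatBase.Abundant A := by
  rintro A hA ⟨f, hf, hAf⟩
  have key : ∀ n, ∀ B ∈ mf.regions, ∃ C ∈ mf.regions, C ⊆ B ∧ Disjoint C (f n) :=
    fun n B hB => hf n B hB
  choose F hF1 hF2 hF3 using key
  let g : ℕ → {B // B ∈ mf.regions} := fun n =>
    Nat.rec ⟨F 0 A hA, hF1 0 A hA⟩ (fun n p => ⟨F (n+1) p.1 p.2, hF1 (n+1) p.1 p.2⟩) n
  have hdisj : ∀ n, Disjoint (g n).1 (f n) := by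
    intro n
    cases n with
    | zero => exact hF3 0 A hA
    | succ m => exact hF3 (m+1) (g m).1 (g m).2
  have hdesc : ∀ n, (g (n+1)).1 ⊆ (g n).1 := fun n => hF2 (n+1) (g n).1 (g n).2
  obtain ⟨x, hx⟩ := mf.desc (fun n => (g n).1) (fun n => (g n).2) hdesc
  have hx' : ∀ n, x ∈ (g n).1 := by simpa [Set.mem_iInter] using hx
  have hxA : x ∈ A := hF2 0 A hA (hx' 0)
  rw [hAf] at hxA
  obtain ⟨_, ⟨m, rfl⟩, hm⟩ := hxA
  exact (hdisj m).ne_of_mem (hx' m) hm rfl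
end

section
/- Suppose (X, C) is a point-meager Baire base satisfying the countable chain condition in which every region has cardinality ℵ₁, and suppose S ⊆ X is non-Baire with test region D, and suppose S and X − S admit decompositions into ℵ₁ many pairwise disjoint pieces {S_α}_{α<Ω} and {T_α}_{α<Ω} such that each S_α is abundant in every region in which S is abundant and each T_α is abundant in every region in which X − S is abundant. Then {S_α : α < Ω} ∪ {T_α : α < Ω} is a uniform non-Baire family (each member is non-Baire with D as a common test region) that partitions X. -/
lemma meager_mono {X : Type*} (cb : CatBase X) {A B : Set X} (h : A ⊆ B)
    (hB : cb.Meager B) : cb.Meager A := by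
  obtain ⟨f, hf, rfl⟩ := hB
  refine ⟨fun n => f n ∩ A, fun n R hR => ?_, ?_⟩
  · obtain ⟨B', hB', hsub, hdisj⟩ := hf n R hR
    exact ⟨B', hB', hsub, hdisj.mono_right Set.inter_subset_left⟩
  · rw [← Set.iUnion_inter]
    exact (Set.inter_eq_right.mpr h).symm

theorem stmt16 {X : Type*} (cb : CatBase X)
    (hpm : ∀ S : Set X, S.Countable → cb.Meager S)
    (hbb : ∀ A ∈ cb.regions, cb.Abundant A)
    (hccc : ∀ D : Set (Set X), D ⊆ cb.regions → D.Pairwise Disjoint → D.Countable)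
    (hcard : ∀ A ∈ cb.regions, Cardinal.mk A = Cardinal.aleph 1)
    {S D : Set X} (hSnb : ¬ cb.Baire S) (hD : D ∈ cb.regions)
    (htest : ∀ E ∈ cb.regions, E ⊆ D → cb.Abundant (S ∩ E) ∧ cb.Abundant (Sᶜ ∩ E))
    (Sf Tf : {α : Ordinal // α < (Cardinal.aleph 1).ord} → Set X)
    (hSdisj : Pairwise (Function.onFun Disjoint Sf))
    (hTdisj : Pairwise (Function.onFun Disjoint Tf))
    (hSun : ⋃ α, Sf α = S) (hTun : ⋃ α, Tf α = Sᶜ)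
    (hSab : ∀ α, ∀ E ∈ cb.regions, cb.Abundant (S ∩ E) → cb.Abundant (Sf α ∩ E))
    (hTab : ∀ α, ∀ E ∈ cb.regions, cb.Abundant (Sᶜ ∩ E) → cb.Abundant (Tf α ∩ E)) :
    (∀ α, ¬ cb.Baire (Sf α) ∧ ¬ cb.Baire (Tf α)) ∧
    (∀ α, ∀ E ∈ cb.regions, E ⊆ D →
      cb.Abundant (Sf α ∩ E) ∧ cb.Abundant ((Sf α)ᶜ ∩ E) ∧
      cb.Abundant (Tf α ∩ E) ∧ cb.Abundant ((Tf α)ᶜ ∩ E)) ∧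
    ((⋃ α, Sf α) ∪ (⋃ α, Tf α) = Set.univ) := by
  have key : ∀ α, ∀ E ∈ cb.regions, E ⊆ D →
      cb.Abundant (Sf α ∩ E) ∧ cb.Abundant ((Sf α)ᶜ ∩ E) ∧
      cb.Abundant (Tf α ∩ E) ∧ cb.Abundant ((Tf α)ᶜ ∩ E) := by
    intro α E hE hED
    obtain ⟨h1, h2⟩ := htest E hE hED
    have hSfS : Sf α ⊆ S := hSun ▸ Set.subset_iUnion Sf α
    have hTfS : Tf α ⊆ Sᶜ := hTun ▸ Set.subset_iUnion Tf α
    refine ⟨hSab α E hE h1, fun hm => h2 ?_, hTab α E hE h2, fun hm => h1 ?_⟩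
    · exact meager_mono cb (Set.inter_subset_inter_left E
        (Set.compl_subset_compl.mpr hSfS)) hm
    · exact meager_mono cb (Set.inter_subset_inter_left E
        (fun x hx h => hTfS h hx)) hm
  refine ⟨fun α => ⟨fun hB => ?_, fun hB => ?_⟩, key, ?_⟩
  · obtain ⟨B, hBr, hBD, hm⟩ := hB D hD
    obtain ⟨k1, k2, _, _⟩ := key α B hBr hBD
    exact hm.elim k1 k2
  · obtain ⟨B, hBr, hBD, hm⟩ := hB D hD
    obtain ⟨_, _, k3, k4⟩ := key α B hBr hBD
    exact hm.elim k3 k4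
  · rw [hSun, hTun, Set.union_compl_self]
end
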